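/- arXiv:1903.02491 — 2 statements merged into one kernel-verified Lean document; each statement's English description precedes it below -/
import Mathlib

section
/- Let a_{ij} ∈ ℂ and h_{ij} ∈ ℂ be given for every edge (i,j) ∈ E, and let Δ be the n×n complex matrix with Δ_{ij} = −h_{ij} a_{ij} for i ≠ j and Δ_{ii} = Σ_{j≠i} a_{ij}. Then the ordinary determinant of the top-left m×m principal submatrix satisfies det Δ_[m] = Σ_{F ∈ ℱ→_m} a_F · ∏_{c ∈ 𝒞(F)} (1 − h_c). -/
/-!
Forman's matrix-tree theorem with complex holonomies along the edges:
`det Δ_[m] = Σ_{F ∈ ℱ→_m} a_F ∏_{c ∈ 𝒞(F)} (1 - h_c)`.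
-/

open Finset Function

/-- Ordered product of the edge values along the path `x, g x, g^[2] x, …, g^[r] x`. -/
def pathProd {V H : Type*} [Ring H] (h : V → V → H) (g : V → V) (x : V) (r : ℕ) : H :=
  ((List.range r).map fun t => h (g^[t] x) (g^[t + 1] x)).prod

/-- `x` is the canonical (`enc`-minimal) point on a nontrivial cycle of `g`. -/
def IsCycleRep {V : Type*} (enc : V → ℕ) (g : V → V) (x : V) : Prop :=
  2 ≤ minimalPeriod g x ∧ ∀ t : ℕ, enc x ≤ enc (g^[t] x)

/-- The canonical representatives of the (nontrivial) cycles of `g`. -/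
noncomputable def cycleReps {V : Type*} [Fintype V] (enc : V → ℕ) (g : V → V) : Finset V :=
  @Finset.filter V (IsCycleRep enc g) (Classical.decPred _) Finset.univ

/-- Extension of `f : U → V` to all of `V = {1,…,n}`, fixing the well pointwise. -/
def extFun {n m : ℕ} (hmn : m ≤ n) (f : Fin m → Fin n) : Fin n → Fin n :=
  fun j => if h : (j : ℕ) < m then f ⟨(j : ℕ), h⟩ else j

lemma pathProd_eq_prod_range {V H : Type*} [CommRing H] (h : V → V → H) (g : V → V) (x : V)
    (r : ℕ) : pathProd h g x r = ∏ t ∈ Finset.range r, h (g^[t] x) (g^[t + 1] x) := by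
  induction r with
  | zero => simp [pathProd]
  | succ r ih =>
      rw [pathProd, List.range_succ, List.map_append, List.prod_append,
        Finset.prod_range_succ, ← pathProd, ih]
      simp

lemma det_one_sub_cyclic (r' : ℕ) (hr' : 1 ≤ r') (w : Fin (r' + 1) → ℂ) :
    Matrix.det (Matrix.of fun i j : Fin (r' + 1) =>
      (if i = j then (1:ℂ) else 0) - if j = i + 1 then w i else 0) = 1 - ∏ i, w i := by
  set A : Matrix (Fin (r'+1)) (Fin (r'+1)) ℂ :=
    Matrix.of fun i j => (if i = j then (1:ℂ) else 0) - if j = i + 1 then w i else 0 with hA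
  have hAapp : ∀ i j, A i j = (if i = j then (1:ℂ) else 0) - if j = i + 1 then w i else 0 :=
    fun i j => rfl
  have hadd : ∀ i : Fin (r'+1), ((i + 1 : Fin (r'+1)) : ℕ) = (i.val + 1) % (r'+1) := by
    intro i
    rw [Fin.val_add, Fin.val_one', Nat.mod_eq_of_lt (show 1 < r'+1 by omega)]
  have haddlt : ∀ i : Fin (r'+1), (i:ℕ) + 1 < r' + 1 → ((i + 1 : Fin (r'+1)) : ℕ) = i + 1 := by
    intro i hi
    rw [hadd, Nat.mod_eq_of_lt hi]
  have hlast0 : (Fin.last r') ≠ 0 := by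
    rw [Ne, Fin.ext_iff]; simp; omega
  have hlastadd : ((Fin.last r' + 1 : Fin (r'+1)) : ℕ) = 0 := by
    rw [hadd, Fin.val_last, Nat.mod_self]
  -- column zero
  have hcol : ∀ i, A i 0 = (if i = 0 then (1:ℂ) else 0) + (if i = Fin.last r' then -w i else 0) := by
    intro i
    have hiv := i.isLt
    rw [hAapp]
    rcases eq_or_ne i 0 with rfl | hi0
    · have h1 : (0 : Fin (r'+1)) ≠ 0 + 1 := by
        intro hcon
        have := congrArg Fin.val hcon
        rw [haddlt 0 (by simp; omega)] at this
        simp at this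
      rw [if_pos rfl, if_neg h1, if_neg hlast0.symm]
      ring
    rcases eq_or_ne i (Fin.last r') with rfl | hil
    · have h1 : (0 : Fin (r'+1)) = Fin.last r' + 1 := by
        rw [Fin.ext_iff, hlastadd, Fin.val_zero]
      rw [if_neg hi0, if_pos h1, if_pos (rfl : Fin.last r' = Fin.last r')]
      ring
    · have hir : (i : ℕ) < r' := by
        have : (i:ℕ) ≠ r' := fun hcon => hil (Fin.ext (by rw [hcon, Fin.val_last]))
        omega
      have h1 : (0 : Fin (r'+1)) ≠ i + 1 := by
        intro hcon
        have := congrArg Fin.val hcon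
        rw [haddlt i (by omega), Fin.val_zero] at this
        omega
      rw [if_neg hi0, if_neg h1, if_neg hil]
      ring
  rw [Matrix.det_succ_column_zero]
  rw [← Finset.sum_subset (Finset.subset_univ ({0, Fin.last r'} : Finset (Fin (r'+1))))
    (by
      intro i _ hi
      simp only [Finset.mem_insert, Finset.mem_singleton] at hi
      push_neg at hi
      rw [hcol i, if_neg hi.1, if_neg hi.2]
      ring)]
  rw [Finset.sum_pair hlast0.symm]
  -- first minor: upper triangular
  have h1 : Matrix.det (A.submatrix (Fin.succAbove 0) Fin.succ) = 1 := by
    rw [Matrix.det_of_upperTriangular]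
    · apply Finset.prod_eq_one
      intro i _
      have hiv := i.isLt
      rw [Matrix.submatrix_apply, Fin.zero_succAbove, hAapp]
      have h2 : Fin.succ i ≠ Fin.succ i + 1 := by
        intro hcon
        have := congrArg Fin.val hcon
        rw [hadd, Fin.val_succ] at this
        rcases Nat.lt_or_ge ((i:ℕ) + 1 + 1) (r'+1) with hc | hc
        · rw [Nat.mod_eq_of_lt hc] at this; omega
        · rw [show ((i:ℕ)+1+1) = r'+1 by omega, Nat.mod_self] at this; omega
      rw [if_pos rfl, if_neg h2]
      norm_num
    · intro i j hij
      simp only [id] at hij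
      have hiv := i.isLt; have hjv := j.isLt
      have hij' : (j : ℕ) < (i : ℕ) := hij
      rw [Matrix.submatrix_apply, Fin.zero_succAbove, hAapp]
      have h3 : Fin.succ i ≠ Fin.succ j := by
        intro hcon; have := congrArg Fin.val hcon
        rw [Fin.val_succ, Fin.val_succ] at this; omega
      have h4 : Fin.succ j ≠ Fin.succ i + 1 := by
        intro hcon
        have := congrArg Fin.val hcon
        rw [hadd, Fin.val_succ, Fin.val_succ] at this
        rcases Nat.lt_or_ge ((i:ℕ) + 1 + 1) (r'+1) with hc | hc
        · rw [Nat.mod_eq_of_lt hc] at this; omega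
        · rw [show ((i:ℕ)+1+1) = r'+1 by omega, Nat.mod_self] at this; omega
      rw [if_neg h3, if_neg h4]
      ring
  -- second minor: lower triangular
  have h2 : Matrix.det (A.submatrix (Fin.last r').succAbove Fin.succ) =
      (-1 : ℂ) ^ r' * ∏ i : Fin r', w i.castSucc := by
    rw [Matrix.det_of_lowerTriangular]
    have hdiag : ∀ i : Fin r', (A.submatrix (Fin.last r').succAbove Fin.succ) i i =
        -1 * w i.castSucc := by
      intro i
      have hiv := i.isLt
      rw [Matrix.submatrix_apply, Fin.succAbove_last, hAapp]
      have h6 : Fin.castSucc i ≠ Fin.succ i := by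
        intro hcon; have := congrArg Fin.val hcon
        rw [Fin.coe_castSucc, Fin.val_succ] at this; omega
      have h7 : Fin.succ i = Fin.castSucc i + 1 := by
        apply Fin.ext
        rw [haddlt _ (by rw [Fin.coe_castSucc]; omega), Fin.coe_castSucc, Fin.val_succ]
      rw [if_neg h6, if_pos h7]
      ring
    rw [Finset.prod_congr rfl (fun i _ => hdiag i), Finset.prod_mul_distrib,
      Finset.prod_const, Finset.card_univ, Fintype.card_fin]
    · intro i j hij
      have hij' : (i : ℕ) < (j : ℕ) := hij
      have hjv := j.isLt
      rw [Matrix.submatrix_apply, Fin.succAbove_last, hAapp]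
      have h6 : Fin.castSucc i ≠ Fin.succ j := by
        intro hcon; have := congrArg Fin.val hcon
        rw [Fin.coe_castSucc, Fin.val_succ] at this; omega
      have h7 : Fin.succ j ≠ Fin.castSucc i + 1 := by
        intro hcon; have := congrArg Fin.val hcon
        rw [haddlt _ (by rw [Fin.coe_castSucc]; omega), Fin.coe_castSucc, Fin.val_succ] at this
        omega
      rw [if_neg h6, if_neg h7]
      ring
  rw [h1, h2, hcol 0, hcol (Fin.last r')]
  rw [if_pos rfl, if_neg hlast0.symm, if_neg hlast0, if_pos rfl]
  have hv : ((-1:ℂ)) ^ ((Fin.last r' : Fin (r'+1)) : ℕ) = (-1)^r' := by simp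
  have hsq : ((-1:ℂ))^r' * (-1)^r' = 1 := by
    rw [← pow_add, ← two_mul, pow_mul]; norm_num
  rw [hv, Fin.prod_univ_castSucc (f := w)]
  simp only [Fin.val_zero, pow_zero]
  have hsq2 : (-1:ℂ)^r' * (-1)^r' = 1 := by
    rw [← pow_add, ← two_mul, pow_mul]; norm_num
  linear_combination ((0 + -w (Fin.last r')) * (∏ i : Fin r', w i.castSucc)) * hsq2

section Restrict

variable {α : Type*} (p : α → Prop) (g : α → α) (hg : ∀ z, p z → p (g z))

/-- restriction of `g` to an invariant subset -/
def restr : {a // p a} → {a // p a} := fun z => ⟨g z.1, hg z.1 z.2⟩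

lemma restr_iterate (t : ℕ) (x : {a // p a}) : ((restr p g hg)^[t] x).1 = g^[t] x.1 := by
  induction t with
  | zero => rfl
  | succ t ih => rw [iterate_succ_apply', iterate_succ_apply', ← ih]; rfl

lemma restr_isPeriodicPt (n : ℕ) (x : {a // p a}) :
    IsPeriodicPt (restr p g hg) n x ↔ IsPeriodicPt g n x.1 := by
  unfold IsPeriodicPt IsFixedPt
  rw [Subtype.ext_iff, restr_iterate]

lemma restr_mem_periodicPts (x : {a // p a}) :
    x ∈ periodicPts (restr p g hg) ↔ x.1 ∈ periodicPts g := by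
  simp only [mem_periodicPts]
  constructor
  · rintro ⟨n, hn, hp⟩; exact ⟨n, hn, (restr_isPeriodicPt p g hg n x).1 hp⟩
  · rintro ⟨n, hn, hp⟩; exact ⟨n, hn, (restr_isPeriodicPt p g hg n x).2 hp⟩

lemma restr_minimalPeriod (x : {a // p a}) :
    minimalPeriod (restr p g hg) x = minimalPeriod g x.1 := by
  by_cases hx : x.1 ∈ periodicPts g
  · have hx' : x ∈ periodicPts (restr p g hg) := (restr_mem_periodicPts p g hg x).2 hx
    apply le_antisymm
    · exact IsPeriodicPt.minimalPeriod_le (minimalPeriod_pos_of_mem_periodicPts hx)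
        ((restr_isPeriodicPt p g hg _ x).2 (isPeriodicPt_minimalPeriod g x.1))
    · exact IsPeriodicPt.minimalPeriod_le (minimalPeriod_pos_of_mem_periodicPts hx')
        ((restr_isPeriodicPt p g hg _ x).1 (isPeriodicPt_minimalPeriod _ x))
  · rw [minimalPeriod_eq_zero_of_notMem_periodicPts hx,
      minimalPeriod_eq_zero_of_notMem_periodicPts]
    rw [restr_mem_periodicPts]
    exact hx

lemma restr_pathProd {H : Type*} [Ring H] (w : α → α → H) (x : {a // p a}) (t : ℕ) :
    pathProd (fun z z' : {a // p a} => w z.1 z'.1) (restr p g hg) x t = pathProd w g x.1 t := by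
  simp only [pathProd, restr_iterate]

lemma restr_isCycleRep (enc : α → ℕ) (x : {a // p a}) :
    IsCycleRep (fun z : {a // p a} => enc z.1) (restr p g hg) x ↔ IsCycleRep enc g x.1 := by
  unfold IsCycleRep
  rw [restr_minimalPeriod]
  constructor
  · rintro ⟨h1, h2⟩
    refine ⟨h1, fun t => ?_⟩
    have := h2 t
    simp only at this
    rwa [restr_iterate] at this
  · rintro ⟨h1, h2⟩
    refine ⟨h1, fun t => ?_⟩
    simp only
    rw [restr_iterate]
    exact h2 t

lemma prod_restr_cycleReps [Fintype α] [DecidableEq α] [DecidablePred p]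
    (enc : α → ℕ) (w : α → α → ℂ) :
    (∏ x ∈ cycleReps (fun z : {a // p a} => enc z.1) (restr p g hg),
      (1 - pathProd (fun z z' : {a // p a} => w z.1 z'.1) (restr p g hg) x
        (minimalPeriod (restr p g hg) x)))
    = ∏ x ∈ (cycleReps enc g).filter p, (1 - pathProd w g x (minimalPeriod g x)) := by
  apply Finset.prod_bij (fun (x : {a // p a}) (_ : x ∈ _) => x.1)
  · intro x hx
    simp only [cycleReps, Finset.mem_filter, Finset.mem_univ, true_and] at hx ⊢
    exact ⟨(restr_isCycleRep p g hg enc x).1 hx, x.2⟩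
  · intro x hx y hy hxy
    exact Subtype.ext hxy
  · intro x hx
    simp only [cycleReps, Finset.mem_filter, Finset.mem_univ, true_and] at hx
    refine ⟨⟨x, hx.2⟩, ?_, rfl⟩
    simp only [cycleReps, Finset.mem_filter, Finset.mem_univ, true_and]
    exact (restr_isCycleRep p g hg enc ⟨x, hx.2⟩).2 hx.1
  · intro x hx
    rw [restr_pathProd, restr_minimalPeriod]

end Restrict

/-- determinant of the block of `1 - Q` corresponding to a single cycle -/
lemma det_orbit_block {α : Type*} [DecidableEq α] (g : α → α) (w : α → α → ℂ) (x₀ : α)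
    (hx : x₀ ∈ periodicPts g) (h2 : 2 ≤ minimalPeriod g x₀)
    [Fintype {z : α // ∃ t, g^[t] x₀ = z}] :
    Matrix.det (Matrix.of fun i j : {z : α // ∃ t, g^[t] x₀ = z} =>
      (if i.1 = j.1 then (1:ℂ) else 0) -
        (if g i.1 = j.1 ∧ g i.1 ≠ i.1 then w i.1 (g i.1) else 0)) =
    1 - pathProd w g x₀ (minimalPeriod g x₀) := by
  obtain ⟨r', hr⟩ : ∃ r', minimalPeriod g x₀ = r' + 1 := ⟨minimalPeriod g x₀ - 1, by omega⟩
  have hr' : 1 ≤ r' := by omega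
  have hrpos : 0 < minimalPeriod g x₀ := by omega
  -- the orbit equivalence
  have hinj : ∀ t₁ t₂ : ℕ, t₁ < minimalPeriod g x₀ → t₂ < minimalPeriod g x₀ →
      g^[t₁] x₀ = g^[t₂] x₀ → t₁ = t₂ := by
    intro t₁ t₂ h₁ h₂ he
    exact (iterate_eq_iterate_iff_of_lt_minimalPeriod h₁ h₂).1 he
  let e : Fin (r' + 1) → {z : α // ∃ t, g^[t] x₀ = z} :=
    fun t => ⟨g^[(t : ℕ)] x₀, ⟨t, rfl⟩⟩
  have he : Bijective e := by
    constructor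
    · intro t₁ t₂ h
      have hval : g^[(t₁:ℕ)] x₀ = g^[(t₂:ℕ)] x₀ := congrArg Subtype.val h
      have ht1 := t₁.isLt; have ht2 := t₂.isLt
      exact Fin.ext (hinj _ _ (by omega) (by omega) hval)
    · rintro ⟨z, t, rfl⟩
      refine ⟨⟨t % (r' + 1), Nat.mod_lt _ (by omega)⟩, ?_⟩
      apply Subtype.ext
      show g^[t % (r' + 1)] x₀ = g^[t] x₀
      rw [← hr]
      exact iterate_mod_minimalPeriod_eq
  let e' : Fin (r' + 1) ≃ {z : α // ∃ t, g^[t] x₀ = z} := Equiv.ofBijective e he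
  rw [← Matrix.det_submatrix_equiv_self e']
  have hperiter : ∀ t : ℕ, minimalPeriod g (g^[t] x₀) = minimalPeriod g x₀ :=
    fun t => minimalPeriod_apply_iterate hx t
  have hnotfix : ∀ t : ℕ, g (g^[t] x₀) ≠ g^[t] x₀ := by
    intro t hc
    have h1 : minimalPeriod g (g^[t] x₀) = 1 := by
      rw [minimalPeriod_eq_one_iff_isFixedPt]; exact hc
    rw [hperiter t] at h1; omega
  have key : (Matrix.of fun i j : {z : α // ∃ t, g^[t] x₀ = z} =>
      (if i.1 = j.1 then (1:ℂ) else 0) -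
        (if g i.1 = j.1 ∧ g i.1 ≠ i.1 then w i.1 (g i.1) else 0)).submatrix e' e' =
      Matrix.of fun i j : Fin (r' + 1) =>
        (if i = j then (1:ℂ) else 0) -
          if j = i + 1 then w (g^[(i:ℕ)] x₀) (g^[(i:ℕ)+1] x₀) else 0 := by
    ext i j
    have hiv := i.isLt; have hjv := j.isLt
    have he'i : (e' i).1 = g^[(i:ℕ)] x₀ := rfl
    have he'j : (e' j).1 = g^[(j:ℕ)] x₀ := rfl
    rw [Matrix.submatrix_apply, Matrix.of_apply, Matrix.of_apply, he'i, he'j]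
    have hc1 : (g^[(i:ℕ)] x₀ = g^[(j:ℕ)] x₀) ↔ (i = j) := by
      constructor
      · intro hh; exact Fin.ext (hinj _ _ (by omega) (by omega) hh)
      · intro hh; rw [hh]
    have hgi : g (g^[(i:ℕ)] x₀) = g^[(i:ℕ)+1] x₀ := (iterate_succ_apply' g _ x₀).symm
    have hc2 : (g (g^[(i:ℕ)] x₀) = g^[(j:ℕ)] x₀ ∧ g (g^[(i:ℕ)] x₀) ≠ g^[(i:ℕ)] x₀) ↔
        (j = i + 1) := by
      rw [and_iff_left (hnotfix i), hgi]
      have hlt : ((i:ℕ)+1) % (r'+1) < minimalPeriod g x₀ := by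
        rw [hr]; exact Nat.mod_lt _ (by omega)
      have hmod : g^[((i:ℕ)+1) % (r'+1)] x₀ = g^[(i:ℕ)+1] x₀ := by
        have hmm := iterate_mod_minimalPeriod_eq (f := g) (x := x₀) (n := (i:ℕ)+1)
        rwa [hr] at hmm
      have hvadd : ((i + 1 : Fin (r'+1)) : ℕ) = ((i:ℕ)+1) % (r'+1) := by
        rw [Fin.val_add, Fin.val_one', Nat.mod_eq_of_lt (show 1 < r'+1 by omega)]
      constructor
      · intro hh
        apply Fin.ext
        rw [hvadd]
        exact (hinj _ _ hlt (by omega) (hmod.trans hh)).symm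
      · intro hh
        rw [hh]
        show g^[(i:ℕ)+1] x₀ = g^[((i+1 : Fin (r'+1)):ℕ)] x₀
        rw [hvadd]
        exact hmod.symm
    rw [if_congr hc1 rfl rfl, if_congr hc2 rfl rfl, hgi]
  rw [key, det_one_sub_cyclic r' hr' (fun i : Fin (r'+1) => w (g^[(i:ℕ)] x₀) (g^[(i:ℕ)+1] x₀)),
    hr, pathProd_eq_prod_range, ← Fin.prod_univ_eq_prod_range]


lemma det_one_sub_functional :
    ∀ (N : ℕ) (α : Type) [Fintype α] [DecidableEq α], Fintype.card α = N →
    ∀ (enc : α → ℕ), Injective enc → ∀ (g : α → α) (w : α → α → ℂ),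
    Matrix.det (Matrix.of fun i j : α =>
        (if i = j then (1:ℂ) else 0) - (if g i = j ∧ g i ≠ i then w i (g i) else 0)) =
    ∏ x ∈ cycleReps enc g, (1 - pathProd w g x (minimalPeriod g x)) := by
  intro N
  induction N using Nat.strong_induction_on with
  | _ N IH =>
    intro α _ _ hcard enc henc g w
    classical
    by_cases hfix : ∀ x, g x = x
    · -- identity case
      have hM : (Matrix.of fun i j : α =>
          (if i = j then (1:ℂ) else 0) - (if g i = j ∧ g i ≠ i then w i (g i) else 0)) = 1 := by
        ext i j
        rw [Matrix.of_apply, Matrix.one_apply,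
          if_neg (fun hc : g i = j ∧ g i ≠ i => hc.2 (hfix i))]
        ring
      rw [hM, Matrix.det_one]
      have hempty : cycleReps enc g = ∅ := by
        rw [Finset.eq_empty_iff_forall_notMem]
        intro x hx
        simp only [cycleReps, Finset.mem_filter, Finset.mem_univ, true_and] at hx
        have h2 := hx.1
        have h1 : minimalPeriod g x = 1 := minimalPeriod_eq_one_iff_isFixedPt.2 (hfix x)
        omega
      rw [hempty, Finset.prod_empty]
    by_cases hper : ∀ x, x ∈ periodicPts g
    · -- all points periodic, and there is a nontrivial cycle
      push_neg at hfix
      obtain ⟨y, hy⟩ := hfix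
      have hy2 : 2 ≤ minimalPeriod g y := by
        have hpos := minimalPeriod_pos_of_mem_periodicPts (hper y)
        have h1 : minimalPeriod g y ≠ 1 := fun hc => hy (minimalPeriod_eq_one_iff_isFixedPt.1 hc)
        omega
      obtain ⟨x₀, hx₀S, hx₀min⟩ := Finset.exists_min_image
        ((Finset.range (minimalPeriod g y)).image (fun t => g^[t] y)) enc
        ⟨y, by
          simp only [Finset.mem_image]
          exact ⟨0, Finset.mem_range.2 (by omega), rfl⟩⟩
      obtain ⟨s, hs, hsx⟩ : ∃ s, s < minimalPeriod g y ∧ g^[s] y = x₀ := by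
        simp only [Finset.mem_image, Finset.mem_range] at hx₀S
        obtain ⟨s, hs1, hs2⟩ := hx₀S
        exact ⟨s, hs1, hs2⟩
      have hrx : minimalPeriod g x₀ = minimalPeriod g y := by
        rw [← hsx]; exact minimalPeriod_apply_iterate (hper y) s
      have hx₀2 : 2 ≤ minimalPeriod g x₀ := by omega
      have hx₀per : x₀ ∈ periodicPts g := hper x₀
      have horbS : ∀ t : ℕ, g^[t] x₀ ∈
          (Finset.range (minimalPeriod g y)).image (fun t => g^[t] y) := by
        intro t
        rw [← hsx, ← iterate_add_apply]
        have hmm := iterate_mod_minimalPeriod_eq (f := g) (x := y) (n := t + s)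
        rw [← hmm]
        simp only [Finset.mem_image, Finset.mem_range]
        exact ⟨(t+s) % minimalPeriod g y, Nat.mod_lt _ (by omega), rfl⟩
      -- invariance of the complement of the orbit
      have hqg : ∀ z, ¬ (∃ t, g^[t] x₀ = z) → ¬ (∃ t, g^[t] x₀ = g z) := by
        intro z hz hgz
        obtain ⟨t, ht⟩ := hgz
        have hm := minimalPeriod_pos_of_mem_periodicPts (hper z)
        refine hz ⟨minimalPeriod g z - 1 + t, ?_⟩
        rw [iterate_add_apply, ht, ← iterate_succ_apply,
          show Nat.succ (minimalPeriod g z - 1) = minimalPeriod g z by omega]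
        exact isPeriodicPt_minimalPeriod g z
      -- block decomposition
      rw [← Matrix.det_submatrix_equiv_self (Equiv.sumCompl (fun z => ∃ t, g^[t] x₀ = z))]
      have hblock : (Matrix.of fun i j : α =>
            (if i = j then (1:ℂ) else 0) -
              (if g i = j ∧ g i ≠ i then w i (g i) else 0)).submatrix
            (Equiv.sumCompl (fun z => ∃ t, g^[t] x₀ = z))
            (Equiv.sumCompl (fun z => ∃ t, g^[t] x₀ = z)) =
          Matrix.fromBlocks
            (Matrix.of fun i j : {z // ∃ t, g^[t] x₀ = z} =>
              (if i.1 = j.1 then (1:ℂ) else 0) -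
                (if g i.1 = j.1 ∧ g i.1 ≠ i.1 then w i.1 (g i.1) else 0))
            (Matrix.of fun (i : {z // ∃ t, g^[t] x₀ = z}) (j : {z // ¬ ∃ t, g^[t] x₀ = z}) =>
              (if i.1 = j.1 then (1:ℂ) else 0) -
                (if g i.1 = j.1 ∧ g i.1 ≠ i.1 then w i.1 (g i.1) else 0))
            0
            (Matrix.of fun i j : {z // ¬ ∃ t, g^[t] x₀ = z} =>
              (if i.1 = j.1 then (1:ℂ) else 0) -
                (if g i.1 = j.1 ∧ g i.1 ≠ i.1 then w i.1 (g i.1) else 0)) := by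
        ext i j
        rcases i with i | i <;> rcases j with j | j
        · rfl
        · rfl
        · simp only [Matrix.submatrix_apply, Equiv.sumCompl_apply_inr,
            Equiv.sumCompl_apply_inl, Matrix.fromBlocks_apply₂₁, Matrix.zero_apply,
            Matrix.of_apply]
          rw [if_neg, if_neg]
          · ring
          · rintro ⟨hgij, -⟩
            exact hqg i.1 i.2 (hgij ▸ j.2)
          · intro hij
            exact i.2 (hij ▸ j.2)
        · rfl
      rw [hblock, Matrix.det_fromBlocks_zero₂₁]
      -- the cycle block
      have hdetA := det_orbit_block g w x₀ hx₀per hx₀2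
      rw [hdetA]
      -- the complementary block, by induction
      have hcard1 : 0 < Fintype.card {z // ∃ t, g^[t] x₀ = z} :=
        Fintype.card_pos_iff.2 ⟨⟨x₀, 0, rfl⟩⟩
      have hcardlt : Fintype.card {z // ¬ ∃ t, g^[t] x₀ = z} < N := by
        rw [← hcard]
        exact Fintype.card_subtype_lt (x := x₀) (not_not_intro ⟨0, rfl⟩)
      have hDeq : (Matrix.of fun i j : {z // ¬ ∃ t, g^[t] x₀ = z} =>
            (if i.1 = j.1 then (1:ℂ) else 0) -
              (if g i.1 = j.1 ∧ g i.1 ≠ i.1 then w i.1 (g i.1) else 0)) =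
          Matrix.of fun i j : {z // ¬ ∃ t, g^[t] x₀ = z} =>
            (if i = j then (1:ℂ) else 0) -
              (if restr _ g hqg i = j ∧ restr _ g hqg i ≠ i then
                (fun a b : {z // ¬ ∃ t, g^[t] x₀ = z} => w a.1 b.1) i (restr _ g hqg i)
                else 0) := by
        ext i j
        simp only [Matrix.of_apply]
        congr 1
        · by_cases hc : i = j
          · rw [if_pos hc, if_pos (congrArg Subtype.val hc)]
          · rw [if_neg hc, if_neg (fun hh => hc (Subtype.ext hh))]
        · by_cases hc : g i.1 = j.1 ∧ g i.1 ≠ i.1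
          · rw [if_pos hc, if_pos ⟨Subtype.ext hc.1, fun hh => hc.2 (congrArg Subtype.val hh)⟩]
            exact rfl
          · rw [if_neg hc, if_neg (fun hh =>
              hc ⟨congrArg Subtype.val hh.1, fun hh2 => hh.2 (Subtype.ext hh2)⟩)]
      rw [hDeq, IH _ hcardlt _ rfl (fun z => enc z.1)
        (fun a b hab => Subtype.ext (henc hab)) (restr _ g hqg)
        (fun a b => w a.1 b.1)]
      rw [prod_restr_cycleReps]
      -- assemble the product
      rw [← Finset.prod_filter_mul_prod_filter_not (cycleReps enc g)
        (fun z => ∃ t, g^[t] x₀ = z)]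
      have hfilterq : (cycleReps enc g).filter (fun z => ∃ t, g^[t] x₀ = z) = {x₀} := by
        apply Finset.eq_singleton_iff_unique_mem.2
        constructor
        · rw [Finset.mem_filter]
          refine ⟨?_, 0, rfl⟩
          simp only [cycleReps, Finset.mem_filter, Finset.mem_univ, true_and]
          exact ⟨hx₀2, fun t => hx₀min _ (horbS t)⟩
        · intro x hx
          rw [Finset.mem_filter] at hx
          obtain ⟨hxc, t, ht⟩ := hx
          simp only [cycleReps, Finset.mem_filter, Finset.mem_univ, true_and] at hxc
          have h1 : enc x₀ ≤ enc x := hx₀min x (ht ▸ horbS t)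
          have hxx : g^[t % minimalPeriod g x₀] x₀ = x := by
            rw [iterate_mod_minimalPeriod_eq, ht]
          have h2 : g^[minimalPeriod g x₀ - t % minimalPeriod g x₀] x = x₀ := by
            rw [← hxx, ← iterate_add_apply, show minimalPeriod g x₀ - t % minimalPeriod g x₀
              + t % minimalPeriod g x₀ = minimalPeriod g x₀ from by
                have := Nat.mod_lt t (show 0 < minimalPeriod g x₀ by omega); omega]
            exact isPeriodicPt_minimalPeriod g x₀
          have h3 : enc x ≤ enc x₀ := h2 ▸ hxc.2 _
          exact henc (le_antisymm h3 h1)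
      rw [hfilterq, Finset.prod_singleton]
    · -- there is a non-periodic point: find one with no preimage
      push_neg at hper
      have hev : ∀ y : α, ∃ k, g^[k] y ∈ periodicPts g := by
        intro y
        obtain ⟨i, j, hne, heq⟩ := Finite.exists_ne_map_eq_of_infinite (fun k : ℕ => g^[k] y)
        have key : ∀ i j : ℕ, i < j → g^[i] y = g^[j] y → g^[i] y ∈ periodicPts g := by
          intro i j hij he
          refine mk_mem_periodicPts (n := j - i) (by omega) ?_
          show g^[j-i] (g^[i] y) = g^[i] y
          rw [← iterate_add_apply, show j - i + i = j by omega]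
          exact he.symm
        rcases hne.lt_or_gt with h | h
        · exact ⟨i, key i j h heq⟩
        · exact ⟨j, key j i h heq.symm⟩
      obtain ⟨y₀, hy₀T, hy₀max⟩ := Finset.exists_max_image
        (Finset.univ.filter (fun z => z ∉ periodicPts g)) (fun y => Nat.find (hev y))
        (by
          obtain ⟨y, hy⟩ := hper
          exact ⟨y, Finset.mem_filter.2 ⟨Finset.mem_univ _, hy⟩⟩)
      have hy₀ : y₀ ∉ periodicPts g := (Finset.mem_filter.1 hy₀T).2
      have hpre : ∀ z, g z ≠ y₀ := by
        intro z hz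
        have hznp : z ∉ periodicPts g := by
          intro hzp
          obtain ⟨n, hn, hp⟩ := hzp
          exact hy₀ (hz ▸ mk_mem_periodicPts hn hp.apply)
        have h0 : ¬ (g^[0] z ∈ periodicPts g) := by simpa using hznp
        have hfind := Nat.find_spec (hev z)
        have hk1 : 1 ≤ Nat.find (hev z) := by
          rcases Nat.eq_zero_or_pos (Nat.find (hev z)) with h | h
          · rw [h] at hfind
            exact absurd hfind h0
          · omega
        have hstep : g^[Nat.find (hev z) - 1] y₀ ∈ periodicPts g := by
          rw [← hz, ← iterate_succ_apply,
            show Nat.succ (Nat.find (hev z) - 1) = Nat.find (hev z) by omega]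
          exact hfind
        have hle : Nat.find (hev y₀) ≤ Nat.find (hev z) - 1 := Nat.find_min' _ hstep
        have hzT : z ∈ Finset.univ.filter (fun z => z ∉ periodicPts g) :=
          Finset.mem_filter.2 ⟨Finset.mem_univ _, hznp⟩
        have hmax := hy₀max z hzT
        have hy₀1 : 1 ≤ Nat.find (hev y₀) := by
          rcases Nat.eq_zero_or_pos (Nat.find (hev y₀)) with h | h
          · have hf := Nat.find_spec (hev y₀)
            rw [h] at hf
            simp only [iterate_zero, id] at hf
            exact absurd hf hy₀
          · omega
        omega
      have hgy₀ : g y₀ ≠ y₀ := hpre y₀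
      -- block decomposition on {y₀} and its complement
      rw [← Matrix.det_submatrix_equiv_self (Equiv.sumCompl (fun z => z = y₀))]
      have hblock : (Matrix.of fun i j : α =>
            (if i = j then (1:ℂ) else 0) -
              (if g i = j ∧ g i ≠ i then w i (g i) else 0)).submatrix
            (Equiv.sumCompl (fun z => z = y₀)) (Equiv.sumCompl (fun z => z = y₀)) =
          Matrix.fromBlocks
            (Matrix.of fun i j : {z // z = y₀} =>
              (if i.1 = j.1 then (1:ℂ) else 0) -
                (if g i.1 = j.1 ∧ g i.1 ≠ i.1 then w i.1 (g i.1) else 0))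
            (Matrix.of fun (i : {z // z = y₀}) (j : {z // ¬ z = y₀}) =>
              (if i.1 = j.1 then (1:ℂ) else 0) -
                (if g i.1 = j.1 ∧ g i.1 ≠ i.1 then w i.1 (g i.1) else 0))
            0
            (Matrix.of fun i j : {z // ¬ z = y₀} =>
              (if i.1 = j.1 then (1:ℂ) else 0) -
                (if g i.1 = j.1 ∧ g i.1 ≠ i.1 then w i.1 (g i.1) else 0)) := by
        ext i j
        rcases i with i | i <;> rcases j with j | j
        · rfl
        · rfl
        · simp only [Matrix.submatrix_apply, Equiv.sumCompl_apply_inr,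
            Equiv.sumCompl_apply_inl, Matrix.fromBlocks_apply₂₁, Matrix.zero_apply,
            Matrix.of_apply]
          rw [if_neg, if_neg]
          · ring
          · rintro ⟨hgij, -⟩
            exact hpre i.1 (hgij.trans j.2)
          · intro hij
            exact i.2 (hij.trans j.2)
        · rfl
      rw [hblock, Matrix.det_fromBlocks_zero₂₁]
      -- the 1×1 block
      haveI : Unique {z // z = y₀} := ⟨⟨⟨y₀, rfl⟩⟩, fun z => Subtype.ext z.2⟩
      have hdetA : Matrix.det (Matrix.of fun i j : {z // z = y₀} =>
          (if i.1 = j.1 then (1:ℂ) else 0) -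
            (if g i.1 = j.1 ∧ g i.1 ≠ i.1 then w i.1 (g i.1) else 0)) = 1 := by
        rw [Matrix.det_unique, Matrix.of_apply]
        have hd : (default : {z // z = y₀}).1 = y₀ := (default : {z // z = y₀}).2
        rw [hd, if_pos rfl, if_neg]
        · ring
        · rintro ⟨hc, -⟩
          exact hpre y₀ hc
      rw [hdetA, one_mul]
      -- the complementary block by induction
      have hNpos : 0 < N := by
        rw [← hcard]
        exact Fintype.card_pos_iff.2 ⟨y₀⟩
      have hcardlt : Fintype.card {z // ¬ z = y₀} < N := by
        rw [← hcard]
        exact Fintype.card_subtype_lt (x := y₀) (not_not_intro rfl)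
      have hqg : ∀ z : α, ¬ z = y₀ → ¬ g z = y₀ := fun z _ => hpre z
      have hDeq : (Matrix.of fun i j : {z // ¬ z = y₀} =>
            (if i.1 = j.1 then (1:ℂ) else 0) -
              (if g i.1 = j.1 ∧ g i.1 ≠ i.1 then w i.1 (g i.1) else 0)) =
          Matrix.of fun i j : {z // ¬ z = y₀} =>
            (if i = j then (1:ℂ) else 0) -
              (if restr _ g hqg i = j ∧ restr _ g hqg i ≠ i then
                (fun a b : {z // ¬ z = y₀} => w a.1 b.1) i (restr _ g hqg i) else 0) := by
        ext i j
        simp only [Matrix.of_apply]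
        congr 1
        · by_cases hc : i = j
          · rw [if_pos hc, if_pos (congrArg Subtype.val hc)]
          · rw [if_neg hc, if_neg (fun hh => hc (Subtype.ext hh))]
        · by_cases hc : g i.1 = j.1 ∧ g i.1 ≠ i.1
          · rw [if_pos hc, if_pos ⟨Subtype.ext hc.1, fun hh => hc.2 (congrArg Subtype.val hh)⟩]
            exact rfl
          · rw [if_neg hc, if_neg (fun hh =>
              hc ⟨congrArg Subtype.val hh.1, fun hh2 => hh.2 (Subtype.ext hh2)⟩)]
      rw [hDeq, IH _ hcardlt _ rfl (fun z => enc z.1)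
        (fun a b hab => Subtype.ext (henc hab)) (restr _ g hqg)
        (fun a b => w a.1 b.1)]
      rw [prod_restr_cycleReps]
      congr 1
      apply Finset.filter_true_of_mem
      intro x hx
      simp only [cycleReps, Finset.mem_filter, Finset.mem_univ, true_and] at hx
      intro hxy
      apply hy₀
      rw [← hxy]
      have h2x := hx.1
      exact minimalPeriod_pos_iff_mem_periodicPts.1 (by omega)

lemma extFun_castLE {n m : ℕ} (hmn : m ≤ n) (f : Fin m → Fin n) (i : Fin m) :
    extFun hmn f (Fin.castLE hmn i) = f i := by
  unfold extFun
  rw [dif_pos (show ((Fin.castLE hmn i : Fin n) : ℕ) < m from i.isLt)]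
  congr 1

theorem stmt7 (n m : ℕ) (hn : 2 ≤ n) (hm : 1 ≤ m) (hmn : m ≤ n)
    (a : Fin n → Fin n → ℂ) (h : Fin n → Fin n → ℂ) :
    Matrix.det
      ((Matrix.of fun i j : Fin n =>
          if i = j then ∑ k ∈ Finset.univ.filter fun k => k ≠ i, a i k
          else - (h i j * a i j)).submatrix (Fin.castLE hmn) (Fin.castLE hmn)) =
    ∑ f : {f : Fin m → Fin n // ∀ i, f i ≠ Fin.castLE hmn i},
      (∏ i : Fin m, a (Fin.castLE hmn i) (f.1 i)) *
        ∏ x ∈ cycleReps Fin.val (extFun hmn f.1),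
          (1 - pathProd h (extFun hmn f.1) x (minimalPeriod (extFun hmn f.1) x)) := by
  classical
  -- Step 1: write each row as a sum of simple rows
  have hrow : ((Matrix.of fun i j : Fin n =>
        if i = j then ∑ k ∈ Finset.univ.filter fun k => k ≠ i, a i k
        else - (h i j * a i j)).submatrix (Fin.castLE hmn) (Fin.castLE hmn)) =
      Matrix.of fun i : Fin m => ∑ k : {k : Fin n // k ≠ Fin.castLE hmn i},
        (fun j : Fin m => a (Fin.castLE hmn i) k.1 *
          ((if i = j then (1:ℂ) else 0) -
            (if (Fin.castLE hmn j : Fin n) = k.1 then h (Fin.castLE hmn i) k.1 else 0))) := by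
    ext i j
    rw [Matrix.submatrix_apply, Matrix.of_apply, Matrix.of_apply, Finset.sum_apply]
    by_cases hij : i = j
    · subst hij
      rw [if_pos rfl]
      rw [Finset.sum_subtype (p := fun k : Fin n => k ≠ Fin.castLE hmn i)
        (Finset.univ.filter (· ≠ Fin.castLE hmn i))
        (by intro x; simp) (fun k => a (Fin.castLE hmn i) k)]
      apply Finset.sum_congr rfl
      intro k _
      rw [if_pos rfl, if_neg (fun hc => k.2 hc.symm)]
      ring
    · rw [if_neg (fun hc => hij (Fin.castLE_injective hmn hc))]
      rw [Fintype.sum_eq_single (⟨Fin.castLE hmn j,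
          fun hc => hij (Fin.castLE_injective hmn hc).symm⟩ :
          {k : Fin n // k ≠ Fin.castLE hmn i})]
      · rw [if_neg hij, if_pos rfl]
        ring
      · intro k hk
        rw [if_neg hij, if_neg (fun hc => hk (Subtype.ext hc.symm))]
        ring
  rw [hrow]
  -- Step 2: multilinearity of the determinant in the rows
  have hml : Matrix.det (Matrix.of fun i : Fin m =>
        ∑ k : {k : Fin n // k ≠ Fin.castLE hmn i},
        (fun j : Fin m => a (Fin.castLE hmn i) k.1 *
          ((if i = j then (1:ℂ) else 0) -
            (if (Fin.castLE hmn j : Fin n) = k.1 then h (Fin.castLE hmn i) k.1 else 0)))) =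
      ∑ r : (∀ i : Fin m, {k : Fin n // k ≠ Fin.castLE hmn i}),
        Matrix.det (Matrix.of fun i : Fin m =>
        (fun j : Fin m => a (Fin.castLE hmn i) (r i).1 *
          ((if i = j then (1:ℂ) else 0) -
            (if (Fin.castLE hmn j : Fin n) = (r i).1 then h (Fin.castLE hmn i) (r i).1
              else 0)))) :=
    (Matrix.detRowAlternating (n := Fin m) (R := ℂ)).toMultilinearMap.map_sum
      (fun (i : Fin m) (k : {k : Fin n // k ≠ Fin.castLE hmn i}) =>
        (fun j : Fin m => a (Fin.castLE hmn i) k.1 *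
          ((if i = j then (1:ℂ) else 0) -
            (if (Fin.castLE hmn j : Fin n) = k.1 then h (Fin.castLE hmn i) k.1 else 0))))
  rw [hml]
  -- Step 3: per summand, pull out the `a` factors and evaluate the determinant
  have hBr : ∀ r : (∀ i : Fin m, {k : Fin n // k ≠ Fin.castLE hmn i}),
      Matrix.det (Matrix.of fun i j : Fin m =>
        ((if i = j then (1:ℂ) else 0) -
          (if (Fin.castLE hmn j : Fin n) = (r i).1 then h (Fin.castLE hmn i) (r i).1 else 0))) =
      ∏ x ∈ cycleReps Fin.val (extFun hmn (fun i => (r i).1)),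
        (1 - pathProd h (extFun hmn (fun i => (r i).1)) x
          (minimalPeriod (extFun hmn (fun i => (r i).1)) x)) := by
    intro r
    have hkey := det_one_sub_functional n (Fin n) (by simp) Fin.val Fin.val_injective
      (extFun hmn (fun i => (r i).1)) h
    rw [← Matrix.det_submatrix_equiv_self (Equiv.sumCompl (fun i : Fin n => (i : ℕ) < m))]
      at hkey
    have hblock : (Matrix.of fun i j : Fin n =>
          (if i = j then (1:ℂ) else 0) -
            (if extFun hmn (fun i => (r i).1) i = j ∧ extFun hmn (fun i => (r i).1) i ≠ i
              then h i (extFun hmn (fun i => (r i).1) i) else 0)).submatrix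
          (Equiv.sumCompl (fun i : Fin n => (i : ℕ) < m))
          (Equiv.sumCompl (fun i : Fin n => (i : ℕ) < m)) =
        Matrix.fromBlocks
          (Matrix.of fun i j : {x : Fin n // (x : ℕ) < m} =>
            (if i.1 = j.1 then (1:ℂ) else 0) -
              (if extFun hmn (fun i => (r i).1) i.1 = j.1 ∧
                  extFun hmn (fun i => (r i).1) i.1 ≠ i.1
                then h i.1 (extFun hmn (fun i => (r i).1) i.1) else 0))
          (Matrix.of fun (i : {x : Fin n // (x : ℕ) < m})
              (j : {x : Fin n // ¬ (x : ℕ) < m}) =>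
            (if i.1 = j.1 then (1:ℂ) else 0) -
              (if extFun hmn (fun i => (r i).1) i.1 = j.1 ∧
                  extFun hmn (fun i => (r i).1) i.1 ≠ i.1
                then h i.1 (extFun hmn (fun i => (r i).1) i.1) else 0))
          0
          (Matrix.of fun i j : {x : Fin n // ¬ (x : ℕ) < m} =>
            (if i.1 = j.1 then (1:ℂ) else 0) -
              (if extFun hmn (fun i => (r i).1) i.1 = j.1 ∧
                  extFun hmn (fun i => (r i).1) i.1 ≠ i.1
                then h i.1 (extFun hmn (fun i => (r i).1) i.1) else 0)) := by
      ext i j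
      rcases i with i | i <;> rcases j with j | j
      · rfl
      · rfl
      · simp only [Matrix.submatrix_apply, Equiv.sumCompl_apply_inr,
          Equiv.sumCompl_apply_inl, Matrix.fromBlocks_apply₂₁, Matrix.zero_apply,
          Matrix.of_apply]
        have hfixi : extFun hmn (fun i => (r i).1) i.1 = i.1 := dif_neg i.2
        rw [if_neg, if_neg]
        · ring
        · rintro ⟨-, hne⟩
          exact hne hfixi
        · intro hc
          exact i.2 (hc ▸ j.2)
      · rfl
    rw [hblock, Matrix.det_fromBlocks_zero₂₁] at hkey
    -- the lower-right block is the identity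
    have hD : (Matrix.of fun i j : {x : Fin n // ¬ (x : ℕ) < m} =>
        (if i.1 = j.1 then (1:ℂ) else 0) -
          (if extFun hmn (fun i => (r i).1) i.1 = j.1 ∧
              extFun hmn (fun i => (r i).1) i.1 ≠ i.1
            then h i.1 (extFun hmn (fun i => (r i).1) i.1) else 0)) = 1 := by
      ext i j
      have hfixi : extFun hmn (fun i => (r i).1) i.1 = i.1 := dif_neg i.2
      rw [Matrix.of_apply, Matrix.one_apply,
        if_neg (show ¬(extFun hmn (fun i => (r i).1) i.1 = j.1 ∧
          extFun hmn (fun i => (r i).1) i.1 ≠ i.1) from fun hc => hc.2 hfixi), sub_zero]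
      by_cases hij : i = j
      · rw [if_pos (congrArg Subtype.val hij), if_pos hij]
      · rw [if_neg (fun hc => hij (Subtype.ext hc)), if_neg hij]
    rw [hD, Matrix.det_one, mul_one] at hkey
    -- the upper-left block is the matrix we want
    have heFm : ∀ _ : Unit, True := fun _ => trivial
    let eFm : Fin m ≃ {x : Fin n // (x : ℕ) < m} :=
      { toFun := fun j => ⟨Fin.castLE hmn j, j.isLt⟩
        invFun := fun i => ⟨(i.1 : ℕ), i.2⟩
        left_inv := fun j => by ext; rfl
        right_inv := fun i => by ext; rfl }
    rw [← Matrix.det_submatrix_equiv_self eFm] at hkey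
    have hAeq : (Matrix.of fun i j : {x : Fin n // (x : ℕ) < m} =>
          (if i.1 = j.1 then (1:ℂ) else 0) -
            (if extFun hmn (fun i => (r i).1) i.1 = j.1 ∧
                extFun hmn (fun i => (r i).1) i.1 ≠ i.1
              then h i.1 (extFun hmn (fun i => (r i).1) i.1) else 0)).submatrix eFm eFm =
        Matrix.of fun i j : Fin m =>
          ((if i = j then (1:ℂ) else 0) -
            (if (Fin.castLE hmn j : Fin n) = (r i).1 then h (Fin.castLE hmn i) (r i).1
              else 0)) := by
      ext i j
      rw [Matrix.submatrix_apply, Matrix.of_apply, Matrix.of_apply]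
      have he1 : (eFm i).1 = Fin.castLE hmn i := rfl
      have he2 : (eFm j).1 = Fin.castLE hmn j := rfl
      rw [he1, he2, extFun_castLE hmn (fun i => (r i).1) i]
      congr 1
      · by_cases hij : i = j
        · rw [if_pos (congrArg (Fin.castLE hmn) hij), if_pos hij]
        · rw [if_neg (fun hc => hij (Fin.castLE_injective hmn hc)), if_neg hij]
      · by_cases hc : (Fin.castLE hmn j : Fin n) = (r i).1
        · rw [if_pos ⟨hc.symm, (r i).2⟩, if_pos hc]
        · rw [if_neg (fun hh => hc hh.1.symm), if_neg hc]
    rw [hAeq] at hkey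
    exact hkey
  -- Step 4: put everything together
  have hsummand : ∀ r : (∀ i : Fin m, {k : Fin n // k ≠ Fin.castLE hmn i}),
      Matrix.det (Matrix.of fun i : Fin m =>
        (fun j : Fin m => a (Fin.castLE hmn i) (r i).1 *
          ((if i = j then (1:ℂ) else 0) -
            (if (Fin.castLE hmn j : Fin n) = (r i).1 then h (Fin.castLE hmn i) (r i).1
              else 0)))) =
      (∏ i : Fin m, a (Fin.castLE hmn i) (r i).1) *
        ∏ x ∈ cycleReps Fin.val (extFun hmn (fun i => (r i).1)),
          (1 - pathProd h (extFun hmn (fun i => (r i).1)) x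
            (minimalPeriod (extFun hmn (fun i => (r i).1)) x)) := by
    intro r
    rw [← hBr r]
    exact Matrix.det_mul_column (fun i => a (Fin.castLE hmn i) (r i).1) _
  rw [Finset.sum_congr rfl (fun r _ => hsummand r)]
  -- Step 5: reindex the sum
  exact (Fintype.sum_equiv
    (Equiv.subtypePiEquivPi (p := fun (i : Fin m) (k : Fin n) => k ≠ Fin.castLE hmn i))
    _ _ (fun F => rfl)).symm
end

section
/- Let Γ be an abelian group, R = ℤ[Γ] its integral group ring (a commutative ring). Let a_{ij} ∈ R and h_{ij} ∈ Γ be given for every edge (i,j) ∈ E, and let Δ be the n×n matrix over R with Δ_{ij} = −[h_{ij}]·a_{ij} for i ≠ j (where [g] denotes the image of g ∈ Γ in ℤ[Γ]) and Δ_{ii} = Σ_{j≠i} a_{ij}. Then det Δ_[m] = Σ_{F ∈ ℱ→_m} a_F · ∏_{c ∈ 𝒞(F)} (1 − [h_c]), an identity in ℤ[Γ]. -/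
/-!
Chaiken's matrix-tree theorem for graphs with holonomy in an abelian group `Γ`,
as an identity in the integral group ring `ℤ[Γ] = MonoidAlgebra ℤ Γ`.
-/

open Finset Function

namespace MTAux

variable {V : Type*} (g : V → V)

/-- `y` is reachable from `x` by iterating `g`. -/
def reach (x y : V) : Prop := ∃ t : ℕ, g^[t] x = y

variable {g}

lemma cyc_mem_periodicPts {x : V} (hx : 2 ≤ minimalPeriod g x) : x ∈ periodicPts g :=
  minimalPeriod_pos_iff_mem_periodicPts.mp (by omega)

lemma cyc_apply_ne {x : V} (hx : 2 ≤ minimalPeriod g x) : g x ≠ x := by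
  intro hgx
  have : IsPeriodicPt g 1 x := by simpa [IsPeriodicPt, IsFixedPt] using hgx
  have := this.minimalPeriod_le one_pos
  omega

lemma cyc_of_ne {x : V} (hx : x ∈ periodicPts g) (hgx : g x ≠ x) :
    2 ≤ minimalPeriod g x := by
  have h1 : 0 < minimalPeriod g x := minimalPeriod_pos_iff_mem_periodicPts.mpr hx
  by_contra hlt
  have hmp : minimalPeriod g x = 1 := by omega
  apply hgx
  have := isPeriodicPt_minimalPeriod g x
  rw [hmp] at this
  simpa [IsPeriodicPt, IsFixedPt] using this

lemma minimalPeriod_iterate {x : V} (hx : x ∈ periodicPts g) (t : ℕ) :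
    minimalPeriod g (g^[t] x) = minimalPeriod g x := by
  induction t with
  | zero => rfl
  | succ t ih =>
    rw [iterate_succ_apply', minimalPeriod_apply, ih]
    rw [← minimalPeriod_pos_iff_mem_periodicPts, ih, minimalPeriod_pos_iff_mem_periodicPts]
    exact hx

lemma cyc_iterate {x : V} (hx : 2 ≤ minimalPeriod g x) (t : ℕ) :
    2 ≤ minimalPeriod g (g^[t] x) := by
  rw [minimalPeriod_iterate (cyc_mem_periodicPts hx)]; exact hx

lemma reach_refl (x : V) : reach g x x := ⟨0, rfl⟩

lemma reach_trans {x y z : V} (hxy : reach g x y) (hyz : reach g y z) : reach g x z := by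
  obtain ⟨t, rfl⟩ := hxy; obtain ⟨s, rfl⟩ := hyz
  exact ⟨s + t, (iterate_add_apply g s t x)⟩

lemma reach_apply {x y : V} (hxy : reach g x y) : reach g x (g y) := by
  obtain ⟨t, rfl⟩ := hxy
  exact ⟨t + 1, by rw [iterate_succ_apply']⟩

lemma reach_symm {x y : V} (hx : x ∈ periodicPts g) (hxy : reach g x y) : reach g y x := by
  obtain ⟨t, rfl⟩ := hxy
  have hp1 : 1 ≤ minimalPeriod g x := minimalPeriod_pos_iff_mem_periodicPts.mpr hx
  refine ⟨minimalPeriod g x * (t + 1) - t, ?_⟩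
  rw [← iterate_add_apply]
  have hle : t ≤ minimalPeriod g x * (t + 1) := le_trans (Nat.le_succ t)
    (Nat.le_mul_of_pos_left (t + 1) hp1)
  rw [Nat.sub_add_cancel hle]
  exact (isPeriodicPt_minimalPeriod g x).mul_const (t + 1)

lemma inj_on_periodic {x y : V} (hx : x ∈ periodicPts g) (hy : y ∈ periodicPts g)
    (hxy : g x = g y) : x = y := by
  have hx1 : 1 ≤ minimalPeriod g x := minimalPeriod_pos_iff_mem_periodicPts.mpr hx
  have hy1 : 1 ≤ minimalPeriod g y := minimalPeriod_pos_iff_mem_periodicPts.mpr hy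
  set N := minimalPeriod g x * minimalPeriod g y with hN
  have hN1 : 1 ≤ N := by rw [hN]; exact Nat.one_le_iff_ne_zero.mpr (by positivity)
  have hNx : g^[N] x = x := (isPeriodicPt_minimalPeriod g x).mul_const _
  have hNy : g^[N] y = y := (isPeriodicPt_minimalPeriod g y).const_mul _
  calc x = g^[N] x := hNx.symm
    _ = g^[N - 1] (g x) := by rw [← iterate_succ_apply]; congr 1; omega
    _ = g^[N - 1] (g y) := by rw [hxy]
    _ = g^[N] y := by rw [← iterate_succ_apply]; congr 1; omega
    _ = y := hNy

/-- Every point on a nontrivial cycle can reach a canonical representative. -/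
lemma exists_rep {enc : V → ℕ} {x : V} (hx : 2 ≤ minimalPeriod g x) :
    ∃ r : V, IsCycleRep enc g r ∧ reach g x r := by
  set p := minimalPeriod g x with hp
  have hp1 : 0 < p := by omega
  have hne : (Finset.range p).Nonempty := ⟨0, by simp [hp1]⟩
  obtain ⟨t0, ht0, hmin⟩ := Finset.exists_min_image (Finset.range p)
    (fun t => enc (g^[t] x)) hne
  refine ⟨g^[t0] x, ⟨cyc_iterate hx t0, ?_⟩, ⟨t0, rfl⟩⟩
  intro s
  rw [← iterate_add_apply]
  have : g^[(s + t0) % p] x = g^[s + t0] x := iterate_mod_minimalPeriod_eq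
  rw [← this]
  exact hmin _ (Finset.mem_range.mpr (Nat.mod_lt _ hp1))

lemma rep_unique {enc : V → ℕ} (henc : Function.Injective enc) {r r' : V}
    (hr : IsCycleRep enc g r) (hr' : IsCycleRep enc g r') (hrr : reach g r r') : r = r' := by
  obtain ⟨t, rfl⟩ := hrr
  obtain ⟨s, hs⟩ := reach_symm (cyc_mem_periodicPts hr.1) ⟨t, rfl⟩
  apply henc
  have h1 := hr.2 t
  have h2 := hr'.2 s
  rw [hs] at h2
  omega

end MTAux

namespace MTAux

variable {n m : ℕ} (hmn : m ≤ n) (f : Fin m → Fin n)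

lemma castLE_mk (j : Fin n) (hj : (j : ℕ) < m) : Fin.castLE hmn ⟨(j : ℕ), hj⟩ = j := rfl

lemma ext_apply (i : Fin m) : extFun hmn f (Fin.castLE hmn i) = f i := by
  have hi : ((Fin.castLE hmn i : Fin n) : ℕ) < m := i.isLt
  rw [extFun, dif_pos hi]
  congr 1

lemma ext_apply_of_ge {j : Fin n} (hj : ¬ (j : ℕ) < m) : extFun hmn f j = j :=
  dif_neg hj

/-- A point on a nontrivial cycle of `extFun hmn f` lies in `U = {0,…,m-1}`. -/
lemma cyc_lt {x : Fin n} (hx : 2 ≤ minimalPeriod (extFun hmn f) x) : (x : ℕ) < m := by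
  by_contra hge
  exact cyc_apply_ne hx (ext_apply_of_ge hmn f hge)

/-- Selection predicate: `x` lies on a cycle whose representative belongs to `S`. -/
def Sel (g : Fin n → Fin n) (S : Finset (Fin n)) (x : Fin n) : Prop :=
  2 ≤ minimalPeriod g x ∧ ∃ r ∈ S, reach g r x

lemma Sel.lt {S : Finset (Fin n)} {x : Fin n}
    (hx : Sel (extFun hmn f) S x) : ((extFun hmn f x : Fin n) : ℕ) < m := by
  apply cyc_lt hmn f
  have h1 := hx.1
  have := minimalPeriod_apply (cyc_mem_periodicPts hx.1) (f := extFun hmn f) (x := x)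
  omega

lemma Sel.apply {g : Fin n → Fin n} {S : Finset (Fin n)} {x : Fin n}
    (hx : Sel g S x) : Sel g S (g x) := by
  obtain ⟨hc, r, hr, hreach⟩ := hx
  refine ⟨?_, r, hr, reach_apply hreach⟩
  rw [minimalPeriod_apply (cyc_mem_periodicPts hc)]; exact hc

lemma Sel.of_apply {g : Fin n → Fin n} {S : Finset (Fin n)} {x : Fin n}
    (hc : 2 ≤ minimalPeriod g x) (hx : Sel g S (g x)) : Sel g S x := by
  obtain ⟨_, r, hr, hreach⟩ := hx
  refine ⟨hc, r, hr, ?_⟩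
  have h1 : reach g (g x) x := reach_symm (cyc_mem_periodicPts hc) (reach_apply (reach_refl x))
  exact reach_trans hreach h1

open Classical in
/-- The underlying function of the permutation associated to a set `S` of cycle reps. -/
noncomputable def selFun (S : Finset (Fin n)) : Fin m → Fin m := fun i =>
  if h : Sel (extFun hmn f) S (Fin.castLE hmn i)
  then ⟨((extFun hmn f (Fin.castLE hmn i) : Fin n) : ℕ), h.lt hmn f⟩ else i

lemma selFun_apply_of_sel {S : Finset (Fin n)} {i : Fin m}
    (h : Sel (extFun hmn f) S (Fin.castLE hmn i)) :
    Fin.castLE hmn (selFun hmn f S i) = extFun hmn f (Fin.castLE hmn i) := by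
  rw [selFun, dif_pos h]; exact castLE_mk hmn _ _

lemma selFun_apply_of_not_sel {S : Finset (Fin n)} {i : Fin m}
    (h : ¬ Sel (extFun hmn f) S (Fin.castLE hmn i)) : selFun hmn f S i = i := dif_neg h

lemma selFun_injective (S : Finset (Fin n)) : Function.Injective (selFun hmn f S) := by
  intro i j hij
  by_cases hi : Sel (extFun hmn f) S (Fin.castLE hmn i) <;>
    by_cases hj : Sel (extFun hmn f) S (Fin.castLE hmn j)
  · -- both selected
    have h1 := selFun_apply_of_sel hmn f hi
    have h2 := selFun_apply_of_sel hmn f hj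
    rw [hij] at h1
    have := inj_on_periodic (cyc_mem_periodicPts hi.1) (cyc_mem_periodicPts hj.1)
      (h1.symm.trans h2)
    exact Fin.castLE_injective hmn this
  · -- i selected, j not
    exfalso
    have h1 := selFun_apply_of_sel hmn f hi
    rw [hij, selFun_apply_of_not_sel hmn f hj] at h1
    exact hj (h1 ▸ hi.apply)
  · exfalso
    have h2 := selFun_apply_of_sel hmn f hj
    rw [← hij, selFun_apply_of_not_sel hmn f hi] at h2
    exact hi (h2 ▸ hj.apply)
  · rw [selFun_apply_of_not_sel hmn f hi, selFun_apply_of_not_sel hmn f hj] at hij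
    exact hij

/-- The permutation of `U` associated to a set `S` of cycle representatives. -/
noncomputable def selPerm (S : Finset (Fin n)) : Equiv.Perm (Fin m) :=
  Equiv.ofBijective _ (Finite.injective_iff_bijective.mp (selFun_injective hmn f S))

lemma selPerm_apply (S : Finset (Fin n)) (i : Fin m) :
    selPerm hmn f S i = selFun hmn f S i := rfl

lemma selPerm_apply_ne {S : Finset (Fin n)} {i : Fin m}
    (h : Sel (extFun hmn f) S (Fin.castLE hmn i)) : selPerm hmn f S i ≠ i := by
  intro he
  have h1 := selFun_apply_of_sel hmn f h
  rw [← selPerm_apply, he] at h1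
  exact cyc_apply_ne h.1 h1.symm

lemma mem_support_selPerm {S : Finset (Fin n)} {i : Fin m} :
    i ∈ (selPerm hmn f S).support ↔ Sel (extFun hmn f) S (Fin.castLE hmn i) := by
  rw [Equiv.Perm.mem_support]
  constructor
  · intro hne
    by_contra hsel
    exact hne (selFun_apply_of_not_sel hmn f hsel)
  · exact selPerm_apply_ne hmn f

end MTAux

namespace MTAux

variable {n m : ℕ} (hmn : m ≤ n) (f : Fin m → Fin n)

lemma mem_cycleReps {V : Type*} [Fintype V] {enc : V → ℕ} {g : V → V} {x : V} :
    x ∈ cycleReps enc g ↔ IsCycleRep enc g x := by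
  classical
  simp only [cycleReps]
  exact (Finset.mem_filter).trans (by simp)

/-- `σ` is compatible with `f` : wherever `σ` moves a point, it agrees with `f`. -/
def Compat (σ : Equiv.Perm (Fin m)) : Prop :=
  ∀ i, σ i ≠ i → f i = Fin.castLE hmn (σ i)

lemma iter_compat {σ : Equiv.Perm (Fin m)} (hσ : Compat hmn f σ) {i : Fin m}
    (hi : i ∈ σ.support) (t : ℕ) :
    (extFun hmn f)^[t] (Fin.castLE hmn i) = Fin.castLE hmn ((σ ^ t) i) := by
  induction t with
  | zero => simp
  | succ t ih =>
    rw [iterate_succ_apply', ih, ext_apply]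
    have hmem : (σ ^ t) i ∈ σ.support := (Equiv.Perm.pow_apply_mem_support).mpr hi
    have := hσ _ (Equiv.Perm.mem_support.mp hmem)
    rw [this]
    congr 1
    rw [← Equiv.Perm.mul_apply, ← pow_succ']

lemma compat_cyc {σ : Equiv.Perm (Fin m)} (hσ : Compat hmn f σ) {i : Fin m}
    (hi : i ∈ σ.support) : 2 ≤ minimalPeriod (extFun hmn f) (Fin.castLE hmn i) := by
  apply cyc_of_ne
  · refine mem_periodicPts.mpr ⟨orderOf σ, orderOf_pos σ, ?_⟩
    show (extFun hmn f)^[orderOf σ] (Fin.castLE hmn i) = Fin.castLE hmn i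
    rw [iter_compat hmn f hσ hi, pow_orderOf_eq_one]
    rfl
  · have h1 := iter_compat hmn f hσ hi 1
    simp only [Function.iterate_one, pow_one] at h1
    rw [h1]
    intro hc
    exact (Equiv.Perm.mem_support.mp hi) (Fin.castLE_injective hmn hc)

/-- The set of cycle representatives selected by a compatible permutation. -/
noncomputable def Sset (σ : Equiv.Perm (Fin m)) : Finset (Fin n) :=
  (cycleReps Fin.val (extFun hmn f)) ∩ (σ.support.image (Fin.castLE hmn))

lemma Sset_subset (σ : Equiv.Perm (Fin m)) :
    Sset hmn f σ ⊆ cycleReps Fin.val (extFun hmn f) := Finset.inter_subset_left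

lemma sel_Sset_iff {σ : Equiv.Perm (Fin m)} (hσ : Compat hmn f σ) {i : Fin m} :
    Sel (extFun hmn f) (Sset hmn f σ) (Fin.castLE hmn i) ↔ i ∈ σ.support := by
  constructor
  · rintro ⟨hc, r, hr, t, hrt⟩
    obtain ⟨-, hr2⟩ := Finset.mem_inter.mp hr
    obtain ⟨j, hj, rfl⟩ := Finset.mem_image.mp hr2
    rw [iter_compat hmn f hσ hj] at hrt
    have : (σ ^ t) j = i := Fin.castLE_injective hmn hrt
    rw [← this]
    exact (Equiv.Perm.pow_apply_mem_support).mpr hj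
  · intro hi
    have hc := compat_cyc hmn f hσ hi
    obtain ⟨r, hrep, t, hrt⟩ := exists_rep (enc := Fin.val) hc
    refine ⟨hc, r, ?_, reach_symm (cyc_mem_periodicPts hc) ⟨t, hrt⟩⟩
    refine Finset.mem_inter.mpr ⟨mem_cycleReps.mpr hrep, ?_⟩
    refine Finset.mem_image.mpr ⟨(σ ^ t) i, (Equiv.Perm.pow_apply_mem_support).mpr hi, ?_⟩
    rw [← iter_compat hmn f hσ hi, hrt]

lemma compat_selPerm (S : Finset (Fin n)) : Compat hmn f (selPerm hmn f S) := by
  intro i hne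
  by_cases hsel : Sel (extFun hmn f) S (Fin.castLE hmn i)
  · have := selFun_apply_of_sel hmn f hsel
    rw [← selPerm_apply] at this
    rw [this, ext_apply]
  · exact absurd (selFun_apply_of_not_sel hmn f hsel) hne

lemma selPerm_Sset {σ : Equiv.Perm (Fin m)} (hσ : Compat hmn f σ) :
    selPerm hmn f (Sset hmn f σ) = σ := by
  apply Equiv.ext
  intro i
  by_cases hi : i ∈ σ.support
  · have hsel : Sel (extFun hmn f) (Sset hmn f σ) (Fin.castLE hmn i) :=
      (sel_Sset_iff hmn f hσ).mpr hi
    apply Fin.castLE_injective hmn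
    rw [selPerm_apply, selFun_apply_of_sel hmn f hsel, ext_apply,
      hσ i (Equiv.Perm.mem_support.mp hi)]
  · have hsel : ¬ Sel (extFun hmn f) (Sset hmn f σ) (Fin.castLE hmn i) :=
      fun hs => hi ((sel_Sset_iff hmn f hσ).mp hs)
    rw [selPerm_apply, selFun_apply_of_not_sel hmn f hsel,
      (Equiv.Perm.notMem_support.mp hi)]

lemma Sset_selPerm {S : Finset (Fin n)} (hS : S ⊆ cycleReps Fin.val (extFun hmn f)) :
    Sset hmn f (selPerm hmn f S) = S := by
  ext x
  constructor
  · intro hx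
    obtain ⟨hx1, hx2⟩ := Finset.mem_inter.mp hx
    obtain ⟨i, hi, rfl⟩ := Finset.mem_image.mp hx2
    obtain ⟨hc, r, hr, hreach⟩ := (mem_support_selPerm hmn f).mp hi
    have hrrep : IsCycleRep Fin.val (extFun hmn f) r := mem_cycleReps.mp (hS hr)
    have := rep_unique (Fin.val_injective) hrrep (mem_cycleReps.mp hx1) hreach
    rwa [← this]
  · intro hx
    have hxrep : IsCycleRep Fin.val (extFun hmn f) x := mem_cycleReps.mp (hS hx)
    have hlt : (x : ℕ) < m := cyc_lt hmn f hxrep.1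
    refine Finset.mem_inter.mpr ⟨hS hx, ?_⟩
    refine Finset.mem_image.mpr ⟨⟨(x : ℕ), hlt⟩, ?_, castLE_mk hmn _ _⟩
    rw [mem_support_selPerm hmn f, castLE_mk hmn _ _]
    exact ⟨hxrep.1, x, hx, reach_refl x⟩

end MTAux

namespace MTAux

variable {n m : ℕ} {Γ : Type*} [CommGroup Γ] (hmn : m ≤ n) (f : Fin m → Fin n)
  (h : Fin n → Fin n → Γ)

/-- The holonomy of the cycle through `x`. -/
noncomputable def hc (g : Fin n → Fin n) (x : Fin n) : Γ :=
  ∏ t ∈ Finset.range (minimalPeriod g x), h (g^[t] x) (g^[t + 1] x)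

/-- The weight of a permutation (sign times product of negated holonomy factors). -/
noncomputable def W (σ : Equiv.Perm (Fin m)) : MonoidAlgebra ℤ Γ :=
  ((Equiv.Perm.sign σ : ℤ) : MonoidAlgebra ℤ Γ) *
    ∏ i ∈ σ.support, (-(MonoidAlgebra.of ℤ Γ (h (Fin.castLE hmn i) (f i))))

lemma W_mul_disjoint {σ τ : Equiv.Perm (Fin m)} (hd : σ.Disjoint τ) :
    W hmn f h (σ * τ) = W hmn f h σ * W hmn f h τ := by
  unfold W
  rw [hd.support_mul, Finset.prod_union (Equiv.Perm.disjoint_iff_disjoint_support.mp hd)]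
  rw [map_mul]
  push_cast
  ring

lemma sel_empty (y : Fin n) : ¬ Sel (extFun hmn f) (∅ : Finset (Fin n)) y := by
  rintro ⟨-, r, hr, -⟩
  exact absurd hr (Finset.notMem_empty r)

lemma selPerm_empty : selPerm hmn f (∅ : Finset (Fin n)) = 1 := by
  apply Equiv.ext
  intro i
  rw [selPerm_apply, selFun_apply_of_not_sel hmn f (sel_empty hmn f _)]
  rfl

lemma W_one : W hmn f h 1 = 1 := by
  unfold W
  simp

lemma W_single {x : Fin n} (hx : IsCycleRep Fin.val (extFun hmn f) x) :
    W hmn f h (selPerm hmn f {x}) =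
      -(MonoidAlgebra.of ℤ Γ (hc h (extFun hmn f) x)) := by
  set g := extFun hmn f with hg
  set p := minimalPeriod g x with hp
  have hp2 : 2 ≤ p := hx.1
  set σ := selPerm hmn f ({x} : Finset (Fin n)) with hσ
  -- the enumeration of the support of σ
  have hlt : ∀ t : ℕ, ((g^[t] x : Fin n) : ℕ) < m := fun t => cyc_lt hmn f (cyc_iterate hx.1 t)
  set β : ℕ → Fin m := fun t => ⟨((g^[t] x : Fin n) : ℕ), hlt t⟩ with hβ
  have hβcast : ∀ t, Fin.castLE hmn (β t) = g^[t] x := fun t => castLE_mk hmn _ _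
  have hmaps : ∀ t ∈ Finset.range p, β t ∈ σ.support := by
    intro t _
    rw [mem_support_selPerm hmn f, hβcast]
    exact ⟨cyc_iterate hx.1 t, x, Finset.mem_singleton_self x, ⟨t, rfl⟩⟩
  have hinj : Set.InjOn β (Finset.range p) := by
    intro t ht t' ht' he
    have : g^[t] x = g^[t'] x := by
      have := congrArg (Fin.castLE hmn) he
      rwa [hβcast, hβcast] at this
    exact iterate_injOn_Iio_minimalPeriod
      (by simpa using Finset.mem_coe.mp ht) (by simpa using Finset.mem_coe.mp ht') this
  have hsurj : Set.SurjOn β (Finset.range p) σ.support := by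
    intro i hi
    obtain ⟨hc2, r, hr, t, hrt⟩ := (mem_support_selPerm hmn f).mp (Finset.mem_coe.mp hi)
    rw [Finset.mem_singleton.mp hr] at hrt
    refine ⟨t % p, by simp [Nat.mod_lt _ (by omega : 0 < p)], ?_⟩
    apply Fin.ext
    show ((g^[t % p] x : Fin n) : ℕ) = (i : ℕ)
    rw [hp, iterate_mod_minimalPeriod_eq, hrt]
    rfl
  have hcard : σ.support.card = p := by
    rw [← Finset.card_nbij β hmaps hinj hsurj, Finset.card_range]
  -- σ is a cycle
  have hx0 : β 0 ∈ σ.support := hmaps 0 (by simp; omega)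
  have hcompat : Compat hmn f σ := compat_selPerm hmn f _
  have hcycle : σ.IsCycle := by
    refine ⟨β 0, Equiv.Perm.mem_support.mp hx0, ?_⟩
    intro j hj
    obtain ⟨hc2, r, hr, t, hrt⟩ := (mem_support_selPerm hmn f).mp
      (Equiv.Perm.mem_support.mpr hj)
    rw [Finset.mem_singleton.mp hr] at hrt
    refine ⟨(t : ℤ), ?_⟩
    rw [zpow_natCast]
    apply Fin.castLE_injective hmn
    rw [← iter_compat hmn f hcompat hx0 t, hβcast]
    simpa using hrt
  have hsign : ((Equiv.Perm.sign σ : ℤ) : MonoidAlgebra ℤ Γ) = -(-1) ^ p := by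
    rw [hcycle.sign, hcard]
    push_cast
    ring
  have hfb : ∀ t : ℕ, f (β t) = g^[t + 1] x := by
    intro t
    rw [iterate_succ_apply', ← hβcast t]
    exact (ext_apply hmn f (β t)).symm
  have hprod : ∏ i ∈ σ.support, (-(MonoidAlgebra.of ℤ Γ (h (Fin.castLE hmn i) (f i)))) =
      ∏ t ∈ Finset.range p, (-(MonoidAlgebra.of ℤ Γ (h (g^[t] x) (g^[t + 1] x)))) := by
    refine (Finset.prod_nbij β hmaps hinj hsurj ?_).symm
    intro t _
    rw [hβcast, hfb]
  rw [W, hsign, hprod]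
  have heach : ∀ t ∈ Finset.range p, (-(MonoidAlgebra.of ℤ Γ (h (g^[t] x) (g^[t + 1] x)))) =
      (-1) * (MonoidAlgebra.of ℤ Γ (h (g^[t] x) (g^[t + 1] x))) := by intros; ring
  rw [Finset.prod_congr rfl heach, Finset.prod_mul_distrib, Finset.prod_const,
    Finset.card_range, hc, ← hp, map_prod, ← mul_assoc, neg_mul, ← mul_pow]
  norm_num

end MTAux

namespace MTAux

variable {n m : ℕ} {Γ : Type*} [CommGroup Γ] (hmn : m ≤ n) (f : Fin m → Fin n)
  (h : Fin n → Fin n → Γ)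

lemma sel_insert_iff {x : Fin n} {S : Finset (Fin n)} {y : Fin n} :
    Sel (extFun hmn f) (insert x S) y ↔
      Sel (extFun hmn f) {x} y ∨ Sel (extFun hmn f) S y := by
  constructor
  · rintro ⟨hc, r, hr, hre⟩
    rcases Finset.mem_insert.mp hr with rfl | hr
    · exact Or.inl ⟨hc, r, Finset.mem_singleton_self r, hre⟩
    · exact Or.inr ⟨hc, r, hr, hre⟩
  · rintro (⟨hc, r, hr, hre⟩ | ⟨hc, r, hr, hre⟩)
    · rw [Finset.mem_singleton.mp hr] at hre
      exact ⟨hc, x, Finset.mem_insert_self x S, hre⟩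
    · exact ⟨hc, r, Finset.mem_insert_of_mem hr, hre⟩

lemma sel_not_both {x : Fin n} {S : Finset (Fin n)}
    (hx : IsCycleRep Fin.val (extFun hmn f) x)
    (hS : S ⊆ cycleReps Fin.val (extFun hmn f)) (hxS : x ∉ S) {y : Fin n} :
    ¬ (Sel (extFun hmn f) {x} y ∧ Sel (extFun hmn f) S y) := by
  rintro ⟨⟨hc, r, hr, hre⟩, ⟨-, r', hr', hre'⟩⟩
  rw [Finset.mem_singleton.mp hr] at hre
  have hrx : IsCycleRep Fin.val (extFun hmn f) r' := mem_cycleReps.mp (hS hr')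
  have hyr : reach (extFun hmn f) y x :=
    reach_symm (cyc_mem_periodicPts hx.1) hre
  have : reach (extFun hmn f) r' x := reach_trans hre' hyr
  have := rep_unique Fin.val_injective hrx hx this
  rw [this] at hr'
  exact hxS hr'

lemma selPerm_disjoint {x : Fin n} {S : Finset (Fin n)}
    (hx : IsCycleRep Fin.val (extFun hmn f) x)
    (hS : S ⊆ cycleReps Fin.val (extFun hmn f)) (hxS : x ∉ S) :
    (selPerm hmn f {x}).Disjoint (selPerm hmn f S) := by
  intro i
  by_cases h1 : Sel (extFun hmn f) ({x} : Finset (Fin n)) (Fin.castLE hmn i)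
  · right
    have h2 : ¬ Sel (extFun hmn f) S (Fin.castLE hmn i) :=
      fun h2 => sel_not_both hmn f hx hS hxS ⟨h1, h2⟩
    exact selFun_apply_of_not_sel hmn f h2
  · left
    exact selFun_apply_of_not_sel hmn f h1

lemma selPerm_insert {x : Fin n} {S : Finset (Fin n)}
    (hx : IsCycleRep Fin.val (extFun hmn f) x)
    (hS : S ⊆ cycleReps Fin.val (extFun hmn f)) (hxS : x ∉ S) :
    selPerm hmn f (insert x S) = selPerm hmn f {x} * selPerm hmn f S := by
  apply Equiv.ext
  intro i
  rw [Equiv.Perm.mul_apply]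
  by_cases h1 : Sel (extFun hmn f) S (Fin.castLE hmn i)
  · have h2 : Sel (extFun hmn f) (insert x S) (Fin.castLE hmn i) :=
      (sel_insert_iff hmn f).mpr (Or.inr h1)
    have e1 := selFun_apply_of_sel hmn f h1
    rw [← selPerm_apply] at e1
    have h3 : Sel (extFun hmn f) S (Fin.castLE hmn (selPerm hmn f S i)) := by
      rw [e1]; exact h1.apply
    have h4 : ¬ Sel (extFun hmn f) ({x} : Finset (Fin n))
        (Fin.castLE hmn (selPerm hmn f S i)) :=
      fun h4 => sel_not_both hmn f hx hS hxS ⟨h4, h3⟩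
    rw [selPerm_apply hmn f ({x} : Finset (Fin n)), selFun_apply_of_not_sel hmn f h4]
    apply Fin.castLE_injective hmn
    rw [selPerm_apply hmn f (insert x S), selFun_apply_of_sel hmn f h2, e1]
  · by_cases h5 : Sel (extFun hmn f) ({x} : Finset (Fin n)) (Fin.castLE hmn i)
    · have h2 : Sel (extFun hmn f) (insert x S) (Fin.castLE hmn i) :=
        (sel_insert_iff hmn f).mpr (Or.inl h5)
      rw [selPerm_apply hmn f S, selFun_apply_of_not_sel hmn f h1]
      apply Fin.castLE_injective hmn
      rw [selPerm_apply hmn f (insert x S), selFun_apply_of_sel hmn f h2,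
        selPerm_apply hmn f ({x} : Finset (Fin n)), selFun_apply_of_sel hmn f h5]
    · have h2 : ¬ Sel (extFun hmn f) (insert x S) (Fin.castLE hmn i) :=
        fun h2 => ((sel_insert_iff hmn f).mp h2).elim h5 h1
      rw [selPerm_apply hmn f S, selFun_apply_of_not_sel hmn f h1,
        selPerm_apply hmn f ({x} : Finset (Fin n)), selFun_apply_of_not_sel hmn f h5,
        selPerm_apply hmn f (insert x S), selFun_apply_of_not_sel hmn f h2]

lemma W_selPerm (S : Finset (Fin n)) (hS : S ⊆ cycleReps Fin.val (extFun hmn f)) :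
    W hmn f h (selPerm hmn f S) =
      ∏ x ∈ S, (-(MonoidAlgebra.of ℤ Γ (hc h (extFun hmn f) x))) := by
  induction S using Finset.induction_on with
  | empty => rw [selPerm_empty, W_one, Finset.prod_empty]
  | @insert x S hxS ih =>
    have hx : IsCycleRep Fin.val (extFun hmn f) x :=
      mem_cycleReps.mp (hS (Finset.mem_insert_self x S))
    have hS' : S ⊆ cycleReps Fin.val (extFun hmn f) :=
      fun y hy => hS (Finset.mem_insert_of_mem hy)
    rw [selPerm_insert hmn f hx hS' hxS,
      W_mul_disjoint hmn f h (selPerm_disjoint hmn f hx hS' hxS),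
      W_single hmn f h hx, ih hS', Finset.prod_insert hxS]

open Classical in
/-- Step B: the sum of weights over compatible permutations. -/
lemma sum_compat :
    ∑ σ ∈ Finset.univ.filter (Compat hmn f),
      W hmn f h σ =
    ∏ x ∈ cycleReps Fin.val (extFun hmn f),
      (1 - MonoidAlgebra.of ℤ Γ (hc h (extFun hmn f) x)) := by
  classical
  have hrhs : ∀ x : Fin n, (1 : MonoidAlgebra ℤ Γ) - MonoidAlgebra.of ℤ Γ (hc h (extFun hmn f) x)
      = (-(MonoidAlgebra.of ℤ Γ (hc h (extFun hmn f) x))) + 1 := by intro x; ring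
  rw [Finset.prod_congr rfl (fun x _ => hrhs x), Finset.prod_add]
  simp only [Finset.prod_const_one, mul_one]
  refine Finset.sum_bij' (fun σ _ => Sset hmn f σ) (fun S _ => selPerm hmn f S)
    ?_ ?_ ?_ ?_ ?_
  · intro σ hσ
    exact Finset.mem_powerset.mpr (Sset_subset hmn f σ)
  · intro S hS
    exact Finset.mem_filter.mpr ⟨Finset.mem_univ _, compat_selPerm hmn f S⟩
  · intro σ hσ
    exact selPerm_Sset hmn f (Finset.mem_filter.mp hσ).2
  · intro S hS
    exact Sset_selPerm hmn f (Finset.mem_powerset.mp hS)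
  · intro σ hσ
    rw [← W_selPerm hmn f h (Sset hmn f σ) (Sset_subset hmn f σ),
      selPerm_Sset hmn f (Finset.mem_filter.mp hσ).2]

end MTAux

namespace MTAux

variable {n m : ℕ} {Γ : Type*} [CommGroup Γ] (hmn : m ≤ n)
  (a : Fin n → Fin n → MonoidAlgebra ℤ Γ) (h : Fin n → Fin n → Γ)

/-- The summand used to expand a diagonal entry of the Laplacian. -/
noncomputable def entry (σ : Equiv.Perm (Fin m)) (i : Fin m) (k : Fin n) :
    MonoidAlgebra ℤ Γ :=
  if σ i = i then a (Fin.castLE hmn i) k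
  else if k = Fin.castLE hmn (σ i)
    then -(MonoidAlgebra.of ℤ Γ (h (Fin.castLE hmn i) k) * a (Fin.castLE hmn i) k) else 0

lemma row_expand (σ : Equiv.Perm (Fin m)) (i : Fin m) :
    (if (Fin.castLE hmn i : Fin n) = Fin.castLE hmn (σ i)
      then ∑ k ∈ Finset.univ.filter (fun k => k ≠ Fin.castLE hmn i), a (Fin.castLE hmn i) k
      else -(MonoidAlgebra.of ℤ Γ (h (Fin.castLE hmn i) (Fin.castLE hmn (σ i))) *
        a (Fin.castLE hmn i) (Fin.castLE hmn (σ i)))) =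
    ∑ k ∈ Finset.univ.filter (fun k => k ≠ Fin.castLE hmn i), entry hmn a h σ i k := by
  by_cases hi : σ i = i
  · rw [if_pos (by rw [hi])]
    exact Finset.sum_congr rfl (fun k _ => (if_pos hi).symm)
  · rw [if_neg (fun e => hi (Fin.castLE_injective hmn e).symm)]
    have : ∀ k ∈ Finset.univ.filter (fun k => k ≠ Fin.castLE hmn i),
        entry hmn a h σ i k = (if k = Fin.castLE hmn (σ i)
          then -(MonoidAlgebra.of ℤ Γ (h (Fin.castLE hmn i) k) * a (Fin.castLE hmn i) k)
          else 0) :=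
      fun k _ => if_neg hi
    rw [Finset.sum_congr rfl this, Finset.sum_ite_eq']
    rw [if_pos (Finset.mem_filter.mpr ⟨Finset.mem_univ _,
      fun e => hi (Fin.castLE_injective hmn e)⟩)]

open Classical in
lemma prod_entry (σ : Equiv.Perm (Fin m)) (p : Fin m → Fin n) :
    ∏ i : Fin m, entry hmn a h σ i (p i) =
    if Compat hmn p σ
      then (∏ i ∈ σ.support, (-(MonoidAlgebra.of ℤ Γ (h (Fin.castLE hmn i) (p i))))) *
        ∏ i : Fin m, a (Fin.castLE hmn i) (p i)
      else 0 := by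
  by_cases hcompat : Compat hmn p σ
  · rw [if_pos hcompat]
    have hsupp : ∀ i ∈ σ.support, entry hmn a h σ i (p i) =
        (-(MonoidAlgebra.of ℤ Γ (h (Fin.castLE hmn i) (p i)))) * a (Fin.castLE hmn i) (p i) := by
      intro i hi
      have hne := Equiv.Perm.mem_support.mp hi
      rw [entry, if_neg hne, if_pos (hcompat i hne)]
      ring
    have hfix : ∀ i ∈ σ.supportᶜ, entry hmn a h σ i (p i) = a (Fin.castLE hmn i) (p i) := by
      intro i hi
      have := Equiv.Perm.notMem_support.mp (Finset.mem_compl.mp hi)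
      rw [entry, if_pos this]
    rw [← Finset.prod_mul_prod_compl σ.support (fun i => entry hmn a h σ i (p i)),
      Finset.prod_congr rfl hsupp, Finset.prod_congr rfl hfix, Finset.prod_mul_distrib,
      mul_assoc, ← Finset.prod_mul_prod_compl σ.support (fun i => a (Fin.castLE hmn i) (p i))]
  · rw [if_neg hcompat]
    rw [Compat] at hcompat
    push_neg at hcompat
    obtain ⟨i, hi1, hi2⟩ := hcompat
    apply Finset.prod_eq_zero (Finset.mem_univ i)
    rw [entry, if_neg hi1, if_neg hi2]

end MTAux

theorem stmt9 (Γ : Type*) [CommGroup Γ]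
    (n m : ℕ) (hn : 2 ≤ n) (hm : 1 ≤ m) (hmn : m ≤ n)
    (a : Fin n → Fin n → MonoidAlgebra ℤ Γ) (h : Fin n → Fin n → Γ) :
    Matrix.det
      ((Matrix.of fun i j : Fin n =>
          if i = j then ∑ k ∈ Finset.univ.filter fun k => k ≠ i, a i k
          else - (MonoidAlgebra.of ℤ Γ (h i j) * a i j)).submatrix
        (Fin.castLE hmn) (Fin.castLE hmn)) =
    ∑ f : {f : Fin m → Fin n // ∀ i, f i ≠ Fin.castLE hmn i},
      (∏ i : Fin m, a (Fin.castLE hmn i) (f.1 i)) *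
        ∏ x ∈ cycleReps Fin.val (extFun hmn f.1),
          (1 - MonoidAlgebra.of ℤ Γ
            (∏ t ∈ Finset.range (minimalPeriod (extFun hmn f.1) x),
              h ((extFun hmn f.1)^[t] x) ((extFun hmn f.1)^[t + 1] x))) := by
  classical
  rw [← Matrix.det_transpose, Matrix.det_apply']
  simp only [Matrix.transpose_apply, Matrix.submatrix_apply, Matrix.of_apply]
  -- expand each diagonal entry as a sum over possible images
  have h1 : ∀ σ : Equiv.Perm (Fin m),
      (∏ i : Fin m, (if (Fin.castLE hmn i : Fin n) = Fin.castLE hmn (σ i)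
        then ∑ k ∈ Finset.univ.filter (fun k => k ≠ (Fin.castLE hmn i : Fin n)),
          a (Fin.castLE hmn i) k
        else -(MonoidAlgebra.of ℤ Γ (h (Fin.castLE hmn i) (Fin.castLE hmn (σ i))) *
          a (Fin.castLE hmn i) (Fin.castLE hmn (σ i))))) =
      ∑ p ∈ Fintype.piFinset (fun i : Fin m =>
          Finset.univ.filter (fun k => k ≠ (Fin.castLE hmn i : Fin n))),
        ∏ i : Fin m, MTAux.entry hmn a h σ i (p i) := by
    intro σ
    rw [← Finset.prod_univ_sum]
    exact Finset.prod_congr rfl (fun i _ => MTAux.row_expand hmn a h σ i)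
  rw [Finset.sum_congr rfl (fun σ _ => by rw [h1 σ, Finset.mul_sum])]
  rw [Finset.sum_comm]
  have hmem : ∀ p : Fin m → Fin n,
      p ∈ Fintype.piFinset (fun i : Fin m =>
        Finset.univ.filter (fun k => k ≠ (Fin.castLE hmn i : Fin n))) ↔
      ∀ i, p i ≠ Fin.castLE hmn i := by
    intro p
    rw [Fintype.mem_piFinset]
    simp
  rw [← Finset.sum_subtype _ hmem (fun p => (∏ i : Fin m, a (Fin.castLE hmn i) (p i)) *
    ∏ x ∈ cycleReps Fin.val (extFun hmn p),
      (1 - MonoidAlgebra.of ℤ Γ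
        (∏ t ∈ Finset.range (minimalPeriod (extFun hmn p) x),
          h ((extFun hmn p)^[t] x) ((extFun hmn p)^[t + 1] x))))]
  refine Finset.sum_congr rfl (fun p hp => ?_)
  -- now fix the function p and sum over permutations
  have h2 : ∀ σ : Equiv.Perm (Fin m),
      ((Equiv.Perm.sign σ : ℤ) : MonoidAlgebra ℤ Γ) * ∏ i : Fin m, MTAux.entry hmn a h σ i (p i) =
      (if MTAux.Compat hmn p σ then MTAux.W hmn p h σ else 0) *
        ∏ i : Fin m, a (Fin.castLE hmn i) (p i) := by
    intro σ
    rw [MTAux.prod_entry hmn a h σ p]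
    by_cases hcompat : MTAux.Compat hmn p σ
    · rw [if_pos hcompat, if_pos hcompat, MTAux.W, mul_assoc]
    · rw [if_neg hcompat, if_neg hcompat, mul_zero, zero_mul]
  rw [Finset.sum_congr rfl (fun σ _ => h2 σ), ← Finset.sum_mul, ← Finset.sum_filter,
    MTAux.sum_compat hmn p h, mul_comm]
  rfl
end
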